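/- The inequality N(AB) ≤ N(A) · N(B) holds for every n ≥ 1 and all A, B ∈ M_n(ℂ) (that is, N is submultiplicative for every n) if and only if σ² ≥ 1 + (1 + 2μ²)^{1/2}. -/

import Mathlib

open Matrix

/-- The Frobenius norm of a complex matrix. -/
noncomputable def frobNorm {n : ℕ} (A : Matrix (Fin n) (Fin n) ℂ) : ℝ :=
  Real.sqrt (∑ i, ∑ j, ‖A i j‖ ^ 2)

/-- The norm `N(Z) = ((1/2)σ²‖Z‖_F² + (1/2)μ²|tr Z|²)^(1/2)` on `M_n(ℂ)`. -/
noncomputable def N2 (σ μ : ℝ) {n : ℕ} (Z : Matrix (Fin n) (Fin n) ℂ) : ℝ :=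
  Real.sqrt ((1 / 2) * σ ^ 2 * frobNorm Z ^ 2 + (1 / 2) * μ ^ 2 * ‖Z.trace‖ ^ 2)

lemma frobNorm_sq {n : ℕ} (A : Matrix (Fin n) (Fin n) ℂ) :
    frobNorm A ^ 2 = ∑ i, ∑ j, ‖A i j‖ ^ 2 :=
  Real.sq_sqrt (by positivity)

lemma f2_mul_le {n : ℕ} (A B : Matrix (Fin n) (Fin n) ℂ) :
    (∑ i, ∑ j, ‖(A * B) i j‖ ^ 2) ≤
      (∑ i, ∑ j, ‖A i j‖ ^ 2) * (∑ i, ∑ j, ‖B i j‖ ^ 2) := by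
  have key : ∀ i k, ‖(A * B) i k‖ ^ 2 ≤
      (∑ j, ‖A i j‖ ^ 2) * (∑ j, ‖B j k‖ ^ 2) := by
    intro i k
    have h1 : ‖(A * B) i k‖ ≤ ∑ j, ‖A i j‖ * ‖B j k‖ := by
      rw [Matrix.mul_apply]
      refine (norm_sum_le _ _).trans ?_
      simp [norm_mul, le_refl]
    calc ‖(A * B) i k‖ ^ 2
        ≤ (∑ j, ‖A i j‖ * ‖B j k‖) ^ 2 := by
          apply pow_le_pow_left₀ (norm_nonneg _) h1
      _ ≤ _ := Finset.sum_mul_sq_le_sq_mul_sq _ _ _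
  calc ∑ i, ∑ k, ‖(A * B) i k‖ ^ 2
      ≤ ∑ i, ∑ k, (∑ j, ‖A i j‖ ^ 2) * (∑ j, ‖B j k‖ ^ 2) := by
        apply Finset.sum_le_sum; intro i _; apply Finset.sum_le_sum; intro k _; exact key i k
    _ = (∑ i, ∑ j, ‖A i j‖ ^ 2) * (∑ k, ∑ j, ‖B j k‖ ^ 2) := by
        rw [← Finset.sum_mul_sum]
    _ = _ := by congr 1; exact Finset.sum_comm

lemma trace_mul_sq_le {n : ℕ} (A B : Matrix (Fin n) (Fin n) ℂ) :
    ‖(A * B).trace‖ ^ 2 ≤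
      (∑ i, ∑ j, ‖A i j‖ ^ 2) * (∑ i, ∑ j, ‖B i j‖ ^ 2) := by
  have h1 : ‖(A * B).trace‖ ≤
      ∑ p : Fin n × Fin n, ‖A p.1 p.2‖ * ‖B p.2 p.1‖ := by
    have : (A * B).trace = ∑ p : Fin n × Fin n, A p.1 p.2 * B p.2 p.1 := by
      rw [Matrix.trace, Fintype.sum_prod_type]
      simp [Matrix.diag, Matrix.mul_apply]
    rw [this]
    refine (norm_sum_le _ _).trans ?_
    simp [norm_mul, le_refl]
  calc ‖(A * B).trace‖ ^ 2
      ≤ (∑ p : Fin n × Fin n, ‖A p.1 p.2‖ * ‖B p.2 p.1‖) ^ 2 := by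
        apply pow_le_pow_left₀ (norm_nonneg _) h1
    _ ≤ (∑ p : Fin n × Fin n, ‖A p.1 p.2‖ ^ 2) *
        (∑ p : Fin n × Fin n, ‖B p.2 p.1‖ ^ 2) :=
        Finset.sum_mul_sq_le_sq_mul_sq _ _ _
    _ = _ := by
        rw [Fintype.sum_prod_type, Fintype.sum_prod_type]
        congr 1
        rw [Finset.sum_comm]


lemma aux_ineq (σ μ a b f t ta tb : ℝ) (ha0 : 0 ≤ a) (hb0 : 0 ≤ b)
    (hta : 0 ≤ ta) (htb : 0 ≤ tb) (hσ : 0 ≤ σ ^ 2) (hμ : 0 ≤ μ ^ 2)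
    (h1 : f ≤ a * b) (h2 : t ≤ a * b) (h : 2 * σ ^ 2 + 2 * μ ^ 2 ≤ σ ^ 4) :
    (1/2) * σ ^ 2 * f + (1/2) * μ ^ 2 * t ≤
      ((1/2) * σ ^ 2 * a + (1/2) * μ ^ 2 * ta) * ((1/2) * σ ^ 2 * b + (1/2) * μ ^ 2 * tb) := by
  have e1 : (1/2) * σ ^ 2 * f ≤ (1/2) * σ ^ 2 * (a * b) :=
    mul_le_mul_of_nonneg_left h1 (by linarith)
  have e2 : (1/2) * μ ^ 2 * t ≤ (1/2) * μ ^ 2 * (a * b) :=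
    mul_le_mul_of_nonneg_left h2 (by linarith)
  have e3 : ((1/2) * σ ^ 2 + (1/2) * μ ^ 2) * (a * b) ≤
      ((1/2) * σ ^ 2 * a) * ((1/2) * σ ^ 2 * b) := by
    have heq : ((1/2) * σ ^ 2 * a) * ((1/2) * σ ^ 2 * b)
        = ((1/2) * σ ^ 2 * ((1/2) * σ ^ 2)) * (a * b) := by ring
    rw [heq]
    exact mul_le_mul_of_nonneg_right (by nlinarith) (mul_nonneg ha0 hb0)
  have c1 : 0 ≤ ((1/2) * σ ^ 2 * a) * ((1/2) * μ ^ 2 * tb) :=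
    mul_nonneg (mul_nonneg (by linarith) ha0) (mul_nonneg (by linarith) htb)
  have c2 : 0 ≤ ((1/2) * μ ^ 2 * ta) * ((1/2) * σ ^ 2 * b) :=
    mul_nonneg (mul_nonneg (by linarith) hta) (mul_nonneg (by linarith) hb0)
  have c3 : 0 ≤ ((1/2) * μ ^ 2 * ta) * ((1/2) * μ ^ 2 * tb) :=
    mul_nonneg (mul_nonneg (by linarith) hta) (mul_nonneg (by linarith) htb)
  have expand : ((1/2) * σ ^ 2 * a + (1/2) * μ ^ 2 * ta) *
      ((1/2) * σ ^ 2 * b + (1/2) * μ ^ 2 * tb)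
      = ((1/2) * σ ^ 2 * a) * ((1/2) * σ ^ 2 * b)
        + ((1/2) * σ ^ 2 * a) * ((1/2) * μ ^ 2 * tb)
        + ((1/2) * μ ^ 2 * ta) * ((1/2) * σ ^ 2 * b)
        + ((1/2) * μ ^ 2 * ta) * ((1/2) * μ ^ 2 * tb) := by ring
  rw [expand]
  have e4 : (1/2) * σ ^ 2 * (a * b) + (1/2) * μ ^ 2 * (a * b)
      = ((1/2) * σ ^ 2 + (1/2) * μ ^ 2) * (a * b) := by ring
  linarith

set_option maxHeartbeats 1000000 in
/-- `N` is submultiplicative on `M_n(ℂ)` for every `n ≥ 1` if and only if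
`σ² ≥ 1 + √(1 + 2μ²)`. -/
theorem submultiplicative_iff (σ μ : ℝ) (hσ : 0 < σ) :
    (∀ n : ℕ, 1 ≤ n → ∀ A B : Matrix (Fin n) (Fin n) ℂ,
      N2 σ μ (A * B) ≤ N2 σ μ A * N2 σ μ B) ↔
    1 + Real.sqrt (1 + 2 * μ ^ 2) ≤ σ ^ 2 := by
  have hcond : (1 + Real.sqrt (1 + 2 * μ ^ 2) ≤ σ ^ 2) ↔ 2 * σ ^ 2 + 2 * μ ^ 2 ≤ σ ^ 4 := by
    constructor
    · intro h
      have h1 : (1:ℝ) ≤ Real.sqrt (1 + 2 * μ ^ 2) := by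
        rw [Real.one_le_sqrt]; nlinarith [sq_nonneg μ]
      have h2 : Real.sqrt (1 + 2 * μ ^ 2) ≤ σ ^ 2 - 1 := by linarith
      have h3 : 1 + 2 * μ ^ 2 ≤ (σ ^ 2 - 1) ^ 2 := by
        have := Real.sq_sqrt (by positivity : (0:ℝ) ≤ 1 + 2 * μ ^ 2)
        nlinarith [Real.sqrt_nonneg (1 + 2 * μ ^ 2)]
      nlinarith
    · intro h
      have hs : (1:ℝ) ≤ σ ^ 2 - 1 := by nlinarith [sq_nonneg μ, mul_pos hσ hσ]
      have : Real.sqrt (1 + 2 * μ ^ 2) ≤ σ ^ 2 - 1 := by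
        rw [show σ ^ 2 - 1 = Real.sqrt ((σ ^ 2 - 1) ^ 2) by
          rw [Real.sqrt_sq (by linarith)]]
        apply Real.sqrt_le_sqrt; nlinarith
      linarith
  rw [hcond]
  constructor
  · intro h
    have := h 2 (by norm_num) (!![(0:ℂ),1;0,0]) (!![(0:ℂ),0;1,0])
    have hAB : (!![(0:ℂ),1;0,0]) * (!![(0:ℂ),0;1,0]) = !![(1:ℂ),0;0,0] := by
      rw [Matrix.mul_fin_two]; norm_num
    rw [hAB] at this
    have e1 : N2 σ μ (!![(1:ℂ),0;0,0]) =
        Real.sqrt ((1/2) * σ ^ 2 + (1/2) * μ ^ 2) := by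
      have ht : (!![(1:ℂ),0;0,0]).trace = 1 := by
        rw [Matrix.trace_fin_two]; norm_num
      have hf : frobNorm (!![(1:ℂ),0;0,0]) = 1 := by
        simp [frobNorm, Fin.sum_univ_two]
      rw [N2, ht, hf]; norm_num
    have e2 : N2 σ μ (!![(0:ℂ),1;0,0]) = Real.sqrt ((1/2) * σ ^ 2) := by
      have ht : (!![(0:ℂ),1;0,0]).trace = 0 := by
        rw [Matrix.trace_fin_two]; norm_num
      have hf : frobNorm (!![(0:ℂ),1;0,0]) = 1 := by
        simp [frobNorm, Fin.sum_univ_two]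
      rw [N2, ht, hf]; norm_num
    have e3 : N2 σ μ (!![(0:ℂ),0;1,0]) = Real.sqrt ((1/2) * σ ^ 2) := by
      have ht : (!![(0:ℂ),0;1,0]).trace = 0 := by
        rw [Matrix.trace_fin_two]; norm_num
      have hf : frobNorm (!![(0:ℂ),0;1,0]) = 1 := by
        simp [frobNorm, Fin.sum_univ_two]
      rw [N2, ht, hf]; norm_num
    rw [e1, e2, e3] at this
    have hs2 : Real.sqrt ((1/2) * σ ^ 2) * Real.sqrt ((1/2) * σ ^ 2) = (1/2) * σ ^ 2 :=
      Real.mul_self_sqrt (by positivity)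
    rw [hs2] at this
    have h4 : (1/2) * σ ^ 2 + (1/2) * μ ^ 2 ≤ ((1/2) * σ ^ 2) ^ 2 := by
      have h5 := mul_self_le_mul_self (Real.sqrt_nonneg ((1/2) * σ ^ 2 + (1/2) * μ ^ 2)) this
      rw [Real.mul_self_sqrt (by positivity)] at h5
      nlinarith
    nlinarith
  · intro h n _ A B
    have key : (1/2) * σ ^ 2 * frobNorm (A * B) ^ 2
          + (1/2) * μ ^ 2 * ‖(A * B).trace‖ ^ 2 ≤
        ((1/2) * σ ^ 2 * frobNorm A ^ 2 + (1/2) * μ ^ 2 * ‖A.trace‖ ^ 2) *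
        ((1/2) * σ ^ 2 * frobNorm B ^ 2 + (1/2) * μ ^ 2 * ‖B.trace‖ ^ 2) := by
      rw [frobNorm_sq, frobNorm_sq, frobNorm_sq]
      exact aux_ineq σ μ _ _ _ _ _ _ (by positivity) (by positivity) (by positivity)
        (by positivity) (sq_nonneg σ) (sq_nonneg μ) (f2_mul_le A B) (trace_mul_sq_le A B) h
    have hA0 : 0 ≤ (1/2) * σ ^ 2 * frobNorm A ^ 2 + (1/2) * μ ^ 2 * ‖A.trace‖ ^ 2 := by
      positivity
    calc N2 σ μ (A * B)
        ≤ Real.sqrt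
            (((1/2) * σ ^ 2 * frobNorm A ^ 2 + (1/2) * μ ^ 2 * ‖A.trace‖ ^ 2) *
             ((1/2) * σ ^ 2 * frobNorm B ^ 2 + (1/2) * μ ^ 2 * ‖B.trace‖ ^ 2)) :=
          Real.sqrt_le_sqrt key
      _ = N2 σ μ A * N2 σ μ B := Real.sqrt_mul hA0 _
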